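/- Let f0, f1 be the automatic transformations of the Mealy automaton A₃, with products written so that (f g)(u) = f(g(u)). Then the following equalities of transformations of infinite words over Fin 4 hold: f0² f0 = f0² f1 = f0²; f1 f0² = f0²; f0 f1 f0 = f0; f0 f1² f0 = f0²; and f1³ f0 f1 = f1 f0 f1³. -/
import Mathlib


/-- The sequence of states visited by a Mealy automaton with transition function `tr`,
started at state `q`, while reading the infinite word `u`. -/
def stateSeq {X Q : Type*} (tr : X → Q → Q) (q : Q) (u : ℕ → X) : ℕ → Q
  | 0 => q
  | k + 1 => tr (u k) (stateSeq tr q u k)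

/-- The automatic transformation of infinite words defined by the Mealy automaton with
transition function `tr` and output function `out` at the state `q`. -/
def autTrans {X Q : Type*} (tr : X → Q → Q) (out : X → Q → X) (q : Q) (u : ℕ → X) : ℕ → X :=
  fun n => out (u n) (stateSeq tr q u n)

/-- The transformation given by a word of states: the product (composition, applied from
right to left) of the corresponding automatic transformations. -/
def wordTrans {X Q : Type*} (tr : X → Q → Q) (out : X → Q → X) (w : List Q) :
    (ℕ → X) → (ℕ → X) :=
  (w.map (autTrans tr out)).foldr (· ∘ ·) id

/-- The growth function of a Mealy automaton: `growth tr out n` is the number of distinct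
transformations of infinite words obtained as compositions of exactly `n` automatic
transformations of the automaton. -/
noncomputable def growth {X Q : Type*} (tr : X → Q → Q) (out : X → Q → X) (n : ℕ) : ℕ :=
  Set.ncard { g : (ℕ → X) → (ℕ → X) | ∃ w : List Q, w.length = n ∧ wordTrans tr out w = g }

/-- The `i`-th finite difference of a function `γ`. -/
def fdiff (γ : ℕ → ℤ) : ℕ → ℕ → ℤ
  | 0, n => γ n
  | i + 1, n => fdiff γ i n - fdiff γ i (n - 1)

/-- Output function of the automaton `A₃`: at `q0` the outputs of `(x0,x1,x2,x3)` are
`(x1,x2,x2,x2)`; at `q1` they are `(x3,x0,x2,x2)`. -/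
def a3Out : Fin 4 → Fin 2 → Fin 4 := fun x q =>
  if q = 0 then (if x = 0 then 1 else 2)
  else (if x = 0 then 3 else if x = 1 then 0 else 2)

/-- Transition function of the automaton `A₃`: all transitions from `q0` stay at `q0`;
from `q1` the transition goes to `q0` on reading `x0` and stays at `q1` otherwise. -/
def a3Tr : Fin 4 → Fin 2 → Fin 2 := fun x q =>
  if q = 0 then 0 else (if x = 0 then 0 else 1)

/-- The automatic transformations `f0, f1` of the automaton `A₃` at states `q0, q1`. -/
def a3F (q : Fin 2) : (ℕ → Fin 4) → (ℕ → Fin 4) := autTrans a3Tr a3Out q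

theorem stateSeq_comp {X Q1 Q2 : Type*} (tr1 : X → Q1 → Q1) (tr2 : X → Q2 → Q2)
    (out2 : X → Q2 → X) (p : Q1) (q : Q2) (u : ℕ → X) (n : ℕ) :
    stateSeq (fun x s => (tr1 (out2 x s.2) s.1, tr2 x s.2)) (p, q) u n
      = (stateSeq tr1 p (autTrans tr2 out2 q u) n, stateSeq tr2 q u n) := by
  induction n with
  | zero => rfl
  | succ k ih => simp [stateSeq, ih, autTrans]

theorem autTrans_comp {X Q1 Q2 : Type*} (tr1 : X → Q1 → Q1) (out1 : X → Q1 → X)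
    (tr2 : X → Q2 → Q2) (out2 : X → Q2 → X) (p : Q1) (q : Q2) :
    autTrans tr1 out1 p ∘ autTrans tr2 out2 q
      = autTrans (fun x s => (tr1 (out2 x s.2) s.1, tr2 x s.2))
          (fun x s => out1 (out2 x s.2) s.1) (p, q) := by
  funext u n
  simp [autTrans, Function.comp, stateSeq_comp]

theorem autTrans_bisim {X Q1 Q2 : Type*} {tr1 : X → Q1 → Q1} {out1 : X → Q1 → X}
    {tr2 : X → Q2 → Q2} {out2 : X → Q2 → X} {q1 : Q1} {q2 : Q2}
    (R : Q1 → Q2 → Prop) (h : R q1 q2)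
    (hout : ∀ x p q, R p q → out1 x p = out2 x q)
    (htr : ∀ x p q, R p q → R (tr1 x p) (tr2 x q)) :
    autTrans tr1 out1 q1 = autTrans tr2 out2 q2 := by
  funext u n
  have key : ∀ n, R (stateSeq tr1 q1 u n) (stateSeq tr2 q2 u n) := by
    intro n
    induction n with
    | zero => exact h
    | succ k ih => exact htr _ _ _ ih
  exact hout _ _ _ (key n)

/-- The defining relations of the semigroup `S_{A₃}` hold among the automatic
transformations `f0, f1` of `A₃` (products composed from right to left). -/
theorem relations_a3 :
    a3F 0 ∘ a3F 0 ∘ a3F 0 = a3F 0 ∘ a3F 0 ∧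
    a3F 0 ∘ a3F 0 ∘ a3F 1 = a3F 0 ∘ a3F 0 ∧
    a3F 1 ∘ a3F 0 ∘ a3F 0 = a3F 0 ∘ a3F 0 ∧
    a3F 0 ∘ a3F 1 ∘ a3F 0 = a3F 0 ∧
    a3F 0 ∘ a3F 1 ∘ a3F 1 ∘ a3F 0 = a3F 0 ∘ a3F 0 ∧
    a3F 1 ∘ a3F 1 ∘ a3F 1 ∘ a3F 0 ∘ a3F 1 = a3F 1 ∘ a3F 0 ∘ a3F 1 ∘ a3F 1 ∘ a3F 1 := by
  refine ⟨?_, ?_, ?_, ?_, ?_, ?_⟩ <;> simp only [a3F, autTrans_comp]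
  · exact autTrans_bisim (fun p q => (p, q) ∈ [(((0,0,0) : Fin 2 × Fin 2 × Fin 2), ((0,0) : Fin 2 × Fin 2))])
      (by decide) (by set_option synthInstance.maxSize 5000 in set_option synthInstance.maxHeartbeats 4000000 in set_option maxHeartbeats 4000000 in decide) (by set_option synthInstance.maxSize 5000 in set_option synthInstance.maxHeartbeats 4000000 in set_option maxHeartbeats 4000000 in decide)
  · exact autTrans_bisim (fun p q => (p, q) ∈
      [(((0,0,0) : Fin 2 × Fin 2 × Fin 2), ((0,0) : Fin 2 × Fin 2)), ((0,0,1), (0,0))])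
      (by decide) (by set_option synthInstance.maxSize 5000 in set_option synthInstance.maxHeartbeats 4000000 in set_option maxHeartbeats 4000000 in decide) (by set_option synthInstance.maxSize 5000 in set_option synthInstance.maxHeartbeats 4000000 in set_option maxHeartbeats 4000000 in decide)
  · exact autTrans_bisim (fun p q => (p, q) ∈ [(((1,0,0) : Fin 2 × Fin 2 × Fin 2), ((0,0) : Fin 2 × Fin 2))])
      (by decide) (by set_option synthInstance.maxSize 5000 in set_option synthInstance.maxHeartbeats 4000000 in set_option maxHeartbeats 4000000 in decide) (by set_option synthInstance.maxSize 5000 in set_option synthInstance.maxHeartbeats 4000000 in set_option maxHeartbeats 4000000 in decide)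
  · exact autTrans_bisim (fun p q => (p, q) ∈ [(((0,1,0) : Fin 2 × Fin 2 × Fin 2), (0 : Fin 2))])
      (by decide) (by set_option synthInstance.maxSize 5000 in set_option synthInstance.maxHeartbeats 4000000 in set_option maxHeartbeats 4000000 in decide) (by set_option synthInstance.maxSize 5000 in set_option synthInstance.maxHeartbeats 4000000 in set_option maxHeartbeats 4000000 in decide)
  · exact autTrans_bisim (fun p q => (p, q) ∈
      [(((0,0,1,0) : Fin 2 × Fin 2 × Fin 2 × Fin 2), ((0,0) : Fin 2 × Fin 2)), ((0,1,1,0), (0,0))])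
      (by decide) (by set_option synthInstance.maxSize 5000 in set_option synthInstance.maxHeartbeats 4000000 in set_option maxHeartbeats 4000000 in decide) (by set_option synthInstance.maxSize 5000 in set_option synthInstance.maxHeartbeats 4000000 in set_option maxHeartbeats 4000000 in decide)
  · exact autTrans_bisim (fun p q => (p, q) ∈
      [(((1,0,1,0,0) : Fin 2 × Fin 2 × Fin 2 × Fin 2 × Fin 2), ((1,0,1,0,0) : Fin 2 × Fin 2 × Fin 2 × Fin 2 × Fin 2)),
       ((1,0,1,0,1), (1,0,1,0,1)), ((1,1,1,0,0), (1,0,0,1,0)),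
       ((1,1,1,0,0), (1,0,1,1,0)), ((1,1,1,0,1), (1,0,1,1,1))])
      (by decide) (by set_option synthInstance.maxSize 5000 in set_option synthInstance.maxHeartbeats 4000000 in set_option maxHeartbeats 4000000 in decide) (by set_option synthInstance.maxSize 5000 in set_option synthInstance.maxHeartbeats 4000000 in set_option maxHeartbeats 4000000 in decide)
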